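/- For antichain covers S and S' of Fin p with levels ℓ = ℓ(S) of length m = S.card and ℓ' = ℓ(S') of length m' = S'.card, if S ⪯ S' then either (i) there exists an index k < min(m, m') with ℓ_k < ℓ'_k, or (ii) m ≤ m' and ℓ_k = ℓ'_k for every index k < m. -/

import Mathlib

/-- `X` covers `Fin p`. -/
def Covers {p : ℕ} (X : Finset (Finset (Fin p))) : Prop :=
  ∀ i : Fin p, ∃ σ ∈ X, i ∈ σ

/-- `S` is an antichain cover of `Fin p`. -/
def AntichainCover {p : ℕ} (S : Finset (Finset (Fin p))) : Prop :=
  IsAntichain (· ⊆ ·) (S : Set (Finset (Fin p))) ∧ Covers S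

/-- `S ⪯ S'` : for every `σ ∈ S` there exists `σ' ∈ S'` with `σ' ⊆ σ`. -/
def Preceq {p : ℕ} (S S' : Finset (Finset (Fin p))) : Prop :=
  ∀ σ ∈ S, ∃ σ' ∈ S', σ' ⊆ σ

/-- The level of `S`: the list of the numbers `p - σ.card` for `σ ∈ S`,
arranged in non-increasing order. -/
def level {p : ℕ} (S : Finset (Finset (Fin p))) : List ℕ :=
  ((S.val.map fun σ => p - σ.card).sort (· ≤ ·)).reverse

lemma level_length {p : ℕ} (S : Finset (Finset (Fin p))) :
    (level S).length = S.card := by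
  rw [level, List.length_reverse, Multiset.length_sort, Multiset.card_map]
  rfl

lemma entry_eq {p : ℕ} {σ τ : Finset (Fin p)} (hsub : τ ⊆ σ)
    (he : p - σ.card = p - τ.card) : τ = σ := by
  have h1 : σ.card ≤ p := by simpa using Finset.card_le_univ σ
  have h2 : τ.card ≤ σ.card := Finset.card_le_card hsub
  exact Finset.eq_of_subset_of_card_le hsub (by omega)

lemma level_cons {p : ℕ} (S : Finset (Finset (Fin p))) (σ : Finset (Fin p))
    (hσ : σ ∈ S) (hmax : ∀ τ ∈ S, p - τ.card ≤ p - σ.card) :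
    level S = (p - σ.card) :: level (S.erase σ) := by
  set e : Finset (Fin p) → ℕ := fun τ => p - τ.card with he
  set M : Multiset ℕ := S.val.map e with hM
  have hσv : σ ∈ S.val := hσ
  have hME : ((S.erase σ).val.map e) = M.erase (e σ) := by
    rw [Finset.erase_val, Multiset.map_erase_of_mem _ _ hσv]
  have hmem : e σ ∈ M := Multiset.mem_map_of_mem _ hσv
  have hcoe : ((((M.erase (e σ)).sort (· ≤ ·)) ++ [e σ] : List ℕ) : Multiset ℕ) = M := by
    rw [← Multiset.coe_add, Multiset.sort_eq]
    have : ([e σ] : Multiset ℕ) = {e σ} := rfl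
    rw [this, add_comm, Multiset.singleton_add, Multiset.cons_erase hmem]
  have hperm : List.Perm (((M.erase (e σ)).sort (· ≤ ·)) ++ [e σ]) (M.sort (· ≤ ·)) := by
    rw [← Multiset.coe_eq_coe, hcoe, Multiset.sort_eq]
  have hsorted1 : List.Pairwise (· ≤ ·) (((M.erase (e σ)).sort (· ≤ ·)) ++ [e σ]) := by
    rw [List.pairwise_append]
    refine ⟨Multiset.pairwise_sort _ _, List.pairwise_singleton _ _, ?_⟩
    intro a ha b hb
    rw [List.mem_singleton] at hb
    subst hb
    have : a ∈ M := Multiset.mem_of_mem_erase (by rwa [Multiset.mem_sort] at ha)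
    obtain ⟨τ, hτ, rfl⟩ := Multiset.mem_map.mp this
    exact hmax τ hτ
  have key : M.sort (· ≤ ·) = ((M.erase (e σ)).sort (· ≤ ·)) ++ [e σ] :=
    List.Perm.eq_of_pairwise' (Multiset.pairwise_sort _ _) hsorted1 hperm.symm
  show (M.sort (· ≤ ·)).reverse = e σ :: (((S.erase σ).val.map e).sort (· ≤ ·)).reverse
  rw [key, hME, List.reverse_append]
  rfl

lemma main_lemma {p : ℕ} : ∀ (n : ℕ) (S S' : Finset (Finset (Fin p))), S.card ≤ n →
    IsAntichain (· ⊆ ·) (S : Set (Finset (Fin p))) → Preceq S S' →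
    (∃ k < min S.card S'.card, (level S).getD k 0 < (level S').getD k 0) ∨
    (S.card ≤ S'.card ∧ ∀ k < S.card, (level S).getD k 0 = (level S').getD k 0) := by
  intro n
  induction n with
  | zero =>
    intro S S' hn _ _
    right
    have : S.card = 0 := Nat.le_zero.mp hn
    exact ⟨by omega, fun k hk => by omega⟩
  | succ n ih =>
    intro S S' hn hA h
    rcases Finset.eq_empty_or_nonempty S with rfl | hne
    · right; exact ⟨by simp, fun k hk => by simp at hk⟩
    -- σ₁ : element of S with maximal entry
    obtain ⟨σ₁, hσ₁, hmax⟩ := Finset.exists_max_image S (fun τ => p - τ.card) hne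
    by_cases hcase : ∃ k < min S.card S'.card, (level S).getD k 0 < (level S').getD k 0
    · exact Or.inl hcase
    push_neg at hcase
    obtain ⟨σ', hσ', hsub⟩ := h σ₁ hσ₁
    have hS'ne : S'.Nonempty := ⟨σ', hσ'⟩
    obtain ⟨τ₁, hτ₁, hmax'⟩ := Finset.exists_max_image S' (fun τ => p - τ.card) hS'ne
    have hLS := level_cons S σ₁ hσ₁ hmax
    have hLS' := level_cons S' τ₁ hτ₁ hmax'
    have h0 : (level S).getD 0 0 = p - σ₁.card := by rw [hLS]; rfl
    have h0' : (level S').getD 0 0 = p - τ₁.card := by rw [hLS']; rfl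
    have hmin : 0 < min S.card S'.card := by
      have := Finset.card_pos.mpr hne
      have := Finset.card_pos.mpr hS'ne
      omega
    have hle : (level S').getD 0 0 ≤ (level S).getD 0 0 := hcase 0 hmin
    have h1 : p - σ₁.card ≤ p - σ'.card := by
      have := Finset.card_le_card hsub
      have : σ₁.card ≤ p := by simpa using Finset.card_le_univ σ₁
      have := Finset.card_le_card hsub
      omega
    have h2 : p - σ'.card ≤ p - τ₁.card := hmax' σ' hσ'
    have heq : p - τ₁.card = p - σ₁.card := by omega
    have heq2 : p - σ'.card = p - σ₁.card := by omega
    have hσ'σ₁ : σ' = σ₁ := entry_eq hsub (by omega)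
    subst hσ'σ₁
    -- now σ' = σ₁ ∈ S', and σ₁ has max entry in S'
    have hmax'' : ∀ τ ∈ S', p - τ.card ≤ p - σ'.card := by
      intro τ hτ; rw [heq2]; rw [← heq]; exact hmax' τ hτ
    have hLS'2 := level_cons S' σ' hσ' hmax''
    -- recurse
    have hAe : IsAntichain (· ⊆ ·) ((S.erase σ') : Set (Finset (Fin p))) := by
      apply hA.subset
      intro x hx
      simp only [Finset.coe_erase, Set.mem_diff] at hx
      exact hx.1
    have hPe : Preceq (S.erase σ') (S'.erase σ') := by
      intro σ hσ
      rw [Finset.mem_erase] at hσ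
      obtain ⟨τ, hτ, hτsub⟩ := h σ hσ.2
      refine ⟨τ, Finset.mem_erase.mpr ⟨?_, hτ⟩, hτsub⟩
      rintro rfl
      exact hA hσ₁ hσ.2 hσ.1.symm hτsub
    have hcard : (S.erase σ').card ≤ n := by
      rw [Finset.card_erase_of_mem hσ₁]
      omega
    rcases ih (S.erase σ') (S'.erase σ') hcard hAe hPe with ⟨k, hk, hlt⟩ | ⟨hle2, heq3⟩
    · left
      refine ⟨k + 1, ?_, ?_⟩
      · rw [Finset.card_erase_of_mem hσ₁, Finset.card_erase_of_mem hσ'] at hk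
        have := Finset.card_pos.mpr hne
        have := Finset.card_pos.mpr hS'ne
        omega
      · rw [hLS, hLS'2, List.getD_cons_succ, List.getD_cons_succ]
        exact hlt
    · right
      rw [Finset.card_erase_of_mem hσ₁, Finset.card_erase_of_mem hσ'] at hle2
      have hc1 := Finset.card_pos.mpr hne
      have hc2 := Finset.card_pos.mpr hS'ne
      constructor
      · omega
      · intro k hk
        match k with
        | 0 => rw [h0, hLS'2]; simp [heq2]
        | k + 1 =>
          rw [hLS, hLS'2, List.getD_cons_succ, List.getD_cons_succ]
          apply heq3
          rw [Finset.card_erase_of_mem hσ₁]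
          omega

theorem preceq_level (p : ℕ) (S S' : Finset (Finset (Fin p)))
    (hS : AntichainCover S) (hS' : AntichainCover S') (h : Preceq S S') :
    (∃ k < min S.card S'.card, (level S).getD k 0 < (level S').getD k 0) ∨
    (S.card ≤ S'.card ∧ ∀ k < S.card, (level S).getD k 0 = (level S').getD k 0) := by
  exact main_lemma S.card S S' le_rfl hS.1 h
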